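/- Let n and r be positive integers with 2r + 1 ≤ n. In ℚ^{n+1} with the standard inner product ⟨·,·⟩ and standard basis e_1, …, e_{n+1}, set α_i = e_i − e_{i+1} for i = 1, …, n. Let w_X : ℚ^{n+1} → ℚ^{n+1} be the linear map induced by the permutation reversing the interval {r+1, …, n−r+1}, i.e. w_X(e_j) = e_{n+2−j} for r+1 ≤ j ≤ n−r+1 and w_X(e_j) = e_j otherwise. Let t : ℚ^{n+1} → ℚ^{n+1} be the linear map with t(e_j) = −e_{n+2−j} for all j (so that t(α_i) = α_{n+1−i}), define Θ = −w_X ∘ t, and let 2ρ_X = ∑_{r+1 ≤ i < j ≤ n−r+1} (e_i − e_j). Then ⟨α_r, Θ(α_r) − 2ρ_X⟩ = n − 2r + 1. -/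

import Mathlib

/-- Example 3.9, Case I: for the symmetric pair of type AIII/IV for `sl_{n+1}` with
`X = {r+1, …, n−r}` and `τ(i) = n+1−i`, one has `⟨α_r, Θ(α_r) − 2ρ_X⟩ = n − 2r + 1`. -/
theorem stmt_8 (n r : ℕ) (hr : 1 ≤ r) (hn : 2 * r + 1 ≤ n)
    (e : ℕ → ℕ → ℚ) (he : ∀ j, e j = fun i => if i = j then (1 : ℚ) else 0)
    (ip : (ℕ → ℚ) → (ℕ → ℚ) → ℚ)
    (hip : ∀ x y, ip x y = ∑ i ∈ Finset.Icc 1 (n + 1), x i * y i)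
    (α : ℕ → ℕ → ℚ) (hα : ∀ i, α i = e i - e (i + 1))
    (wX : (ℕ → ℚ) →ₗ[ℚ] (ℕ → ℚ))
    (hw : ∀ j, 1 ≤ j → j ≤ n + 1 →
      wX (e j) = if r + 1 ≤ j ∧ j ≤ n - r + 1 then e (n + 2 - j) else e j)
    (t : (ℕ → ℚ) →ₗ[ℚ] (ℕ → ℚ))
    (ht : ∀ j, 1 ≤ j → j ≤ n + 1 → t (e j) = -(e (n + 2 - j)))
    (twoRho : ℕ → ℚ)
    (hρ : twoRho = ∑ i ∈ Finset.Icc (r + 1) (n - r + 1),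
      ∑ j ∈ Finset.Ioc i (n - r + 1), (e i - e j)) :
    ip (α r) ((-(wX ∘ₗ t)) (α r) - twoRho) = (n : ℚ) - 2 * r + 1 := by
  -- compute Θ(α r)
  have hΘ : (-(wX ∘ₗ t)) (α r) = e (n + 2 - r) - e (r + 1) := by
    rw [hα]
    have h1 : t (e r) = -(e (n + 2 - r)) := ht r hr (by omega)
    have h2 : t (e (r + 1)) = -(e (n + 2 - (r + 1))) := ht (r + 1) (by omega) (by omega)
    have hc1 : ¬(r + 1 ≤ n + 2 - r ∧ n + 2 - r ≤ n - r + 1) := by omega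
    have hw1 : wX (e (n + 2 - r)) = e (n + 2 - r) := by
      rw [hw (n + 2 - r) (by omega) (by omega), if_neg hc1]
    have hc2 : r + 1 ≤ n + 2 - (r + 1) ∧ n + 2 - (r + 1) ≤ n - r + 1 := by
      constructor <;> omega
    have hw2 : wX (e (n + 2 - (r + 1))) = e (r + 1) := by
      rw [hw (n + 2 - (r + 1)) (by omega) (by omega), if_pos hc2,
        show n + 2 - (n + 2 - (r + 1)) = r + 1 by omega]
    simp only [LinearMap.neg_apply, LinearMap.comp_apply, map_sub, h1, h2,
      map_neg, hw1, hw2]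
    abel
  rw [hip, hΘ, hα]
  set v : ℕ → ℚ := fun i => (e (n + 2 - r) - e (r + 1) - twoRho) i with hv
  have key : ∀ i ∈ Finset.Icc 1 (n + 1),
      (e r - e (r + 1)) i * (e (n + 2 - r) - e (r + 1) - twoRho) i
      = (if i = r then v i else 0) - (if i = r + 1 then v i else 0) := by
    intro i _
    simp only [he, Pi.sub_apply, hv]
    by_cases h1 : i = r
    · simp [h1, (by omega : ¬ r = r + 1)]
    · by_cases h2 : i = r + 1
      · simp [h1, h2, (by omega : ¬ r + 1 = r)]
      · simp [h1, h2]
  rw [Finset.sum_congr rfl key, Finset.sum_sub_distrib,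
    Finset.sum_ite_eq' _ r v, Finset.sum_ite_eq' _ (r + 1) v,
    if_pos (by simp; omega), if_pos (by simp; omega)]
  -- compute twoRho at r and r+1
  have hρr : twoRho r = 0 := by
    rw [hρ]
    simp only [Finset.sum_apply, Pi.sub_apply, he]
    apply Finset.sum_eq_zero
    intro i hi
    apply Finset.sum_eq_zero
    intro j hj
    simp only [Finset.mem_Icc] at hi
    simp only [Finset.mem_Ioc] at hj
    rw [if_neg (by omega), if_neg (by omega)]
    ring
  have hρr1 : twoRho (r + 1) = (n : ℚ) - 2 * r := by
    rw [hρ]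
    simp only [Finset.sum_apply, Pi.sub_apply, he]
    have : ∀ i ∈ Finset.Icc (r + 1) (n - r + 1),
        (∑ j ∈ Finset.Ioc i (n - r + 1),
          ((if r + 1 = i then (1 : ℚ) else 0) - (if r + 1 = j then 1 else 0)))
        = if i = r + 1 then ((n : ℚ) - 2 * r) else 0 := by
      intro i hi
      simp only [Finset.mem_Icc] at hi
      by_cases h : i = r + 1
      · subst h
        rw [Finset.sum_congr rfl (fun j hj => by
          simp only [Finset.mem_Ioc] at hj
          rw [if_pos rfl, if_neg (by omega)]), if_pos rfl]
        simp only [Finset.sum_const, Nat.card_Ioc, nsmul_eq_mul, mul_one]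
        have h2 : n - r + 1 - (r + 1) = n - 2 * r := by omega
        rw [h2, Nat.cast_sub (by omega)]
        push_cast
        ring
      · rw [Finset.sum_congr rfl (fun j hj => by
          simp only [Finset.mem_Ioc] at hj
          rw [if_neg (by omega), if_neg (by omega)]), if_neg h]
        simp
    rw [Finset.sum_congr rfl this, Finset.sum_ite_eq' _ (r + 1),
      if_pos (by simp; omega)]
  have hne1 : ¬ r = n + 2 - r := by omega
  have hne2 : ¬ r = r + 1 := by omega
  have hne3 : ¬ r + 1 = n + 2 - r := by omega
  have hvr : v r = 0 := by
    simp [hv, he, hρr, if_neg hne1, if_neg hne2]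
  have hvr1 : v (r + 1) = -1 - ((n : ℚ) - 2 * r) := by
    simp [hv, he, hρr1, if_neg hne3]
  rw [hvr, hvr1]
  ring
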